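/- Let α be a real number with 0 < α < 1 satisfying F(1 − α) = √3 · F(α). Then α = (2 − √3)/4. -/

import Mathlib

open Set Filter Topology

/-- Ramanujan's hypergeometric series `F(α) = ∑ ((2n choose n)/4ⁿ)² αⁿ`. -/
noncomputable def F (α : ℝ) : ℝ :=
  ∑' n : ℕ, ((Nat.choose (2 * n) n : ℝ) / 4 ^ n) ^ 2 * α ^ n

namespace SM3

noncomputable def c (n : ℕ) : ℝ := ((Nat.choose (2 * n) n : ℝ) / 4 ^ n) ^ 2

lemma F_eq (x : ℝ) : F x = ∑' n : ℕ, c n * x ^ n := rfl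

noncomputable def F1 (x : ℝ) : ℝ := ∑' n : ℕ, ((n : ℝ) + 1) * c (n + 1) * x ^ n
noncomputable def F2 (x : ℝ) : ℝ :=
  ∑' n : ℕ, ((n : ℝ) + 1) * ((n : ℝ) + 2) * c (n + 2) * x ^ n

lemma c_pos (n : ℕ) : 0 < c n := by
  have h : 0 < (Nat.choose (2 * n) n : ℝ) := by
    exact_mod_cast Nat.choose_pos (by omega)
  unfold c
  positivity

lemma c_zero : c 0 = 1 := by simp [c]

lemma c_one : c 1 = 1 / 4 := by norm_num [c]

lemma c_rec (n : ℕ) : 4 * ((n : ℝ) + 1) ^ 2 * c (n + 1) = (2 * n + 1) ^ 2 * c n := by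
  have key : ((n : ℝ) + 1) * (Nat.choose (2 * (n + 1)) (n + 1) : ℝ)
      = 2 * (2 * n + 1) * (Nat.choose (2 * n) n : ℝ) := by
    have := Nat.succ_mul_centralBinom_succ n
    rw [Nat.centralBinom, Nat.centralBinom] at this
    exact_mod_cast this
  have key2 : (((n : ℝ) + 1) * (Nat.choose (2 * (n + 1)) (n + 1) : ℝ)) ^ 2
      = (2 * (2 * n + 1) * (Nat.choose (2 * n) n : ℝ)) ^ 2 := by rw [key]
  have h4 : (4 : ℝ) ^ (n + 1) = 4 * 4 ^ n := by ring
  unfold c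
  rw [div_pow, div_pow, h4]
  have hp : (4 : ℝ) ^ n ≠ 0 := by positivity
  field_simp
  linear_combination key2

lemma c_le_one (n : ℕ) : c n ≤ 1 := by
  induction n with
  | zero => simp [c_zero]
  | succ n ih =>
    have hrec := c_rec n
    have hpos := c_pos (n + 1)
    have hpos' := c_pos n
    have h1 : (2 * (n : ℝ) + 1) ^ 2 * c n ≤ (2 * (n : ℝ) + 1) ^ 2 * 1 := by
      apply mul_le_mul_of_nonneg_left ih (by positivity)
    have hq : (0:ℝ) < 4 * ((n : ℝ) + 1) ^ 2 := by positivity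
    have h2 : 4 * ((n : ℝ) + 1) ^ 2 * c (n + 1) ≤ 4 * ((n : ℝ) + 1) ^ 2 * 1 := by
      rw [hrec]; nlinarith [h1, Nat.cast_nonneg (α := ℝ) n]
    exact le_of_mul_le_mul_left h2 hq



lemma c_abs_le (n : ℕ) : |c n| ≤ 1 := by
  rw [abs_of_pos (c_pos n)]; exact c_le_one n

lemma summable_geom_w (x : ℝ) (hx : |x| < 1) (k : ℕ) :
    Summable fun n : ℕ => ((n : ℝ) + 1) ^ k * |x| ^ n := by
  have h := summable_pow_mul_geometric_of_norm_lt_one (R := ℝ) (r := |x|) k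
    (by rwa [Real.norm_eq_abs, abs_abs])
  have h2 : Summable fun n : ℕ => ((n : ℝ) + 1) ^ k * |x| ^ (n + 1) := by
    have := (summable_nat_add_iff 1).2 h
    apply this.congr
    intro n
    push_cast
    ring
  have h3 := h2.mul_left (|x|⁻¹)
  rcases eq_or_ne x 0 with rfl | hx0
  · apply summable_of_ne_finset_zero (s := {0})
    intro n hn
    simp at hn
    simp [pow_eq_zero_iff, hn]
  · apply h3.congr
    intro n
    have : |x| ≠ 0 := by simpa using hx0
    field_simp
    ring

lemma sum0 {x : ℝ} (hx : |x| < 1) : Summable fun n : ℕ => c n * x ^ n := by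
  apply Summable.of_norm_bounded (summable_geom_w x hx 0)
  intro n
  rw [norm_mul, norm_pow, Real.norm_eq_abs, Real.norm_eq_abs, pow_zero]
  calc |c n| * |x| ^ n ≤ 1 * |x| ^ n := by
        apply mul_le_mul_of_nonneg_right (c_abs_le n) (by positivity)
    _ = 1 * |x| ^ n := by ring

lemma sum1 {x : ℝ} (hx : |x| < 1) :
    Summable fun n : ℕ => ((n : ℝ) + 1) * c (n + 1) * x ^ n := by
  apply Summable.of_norm_bounded (summable_geom_w x hx 1)
  intro n
  rw [norm_mul, norm_mul, norm_pow, Real.norm_eq_abs, Real.norm_eq_abs, Real.norm_eq_abs,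
    pow_one]
  have h1 : |((n : ℝ) + 1)| = (n : ℝ) + 1 := abs_of_pos (by positivity)
  rw [h1]
  calc ((n : ℝ) + 1) * |c (n + 1)| * |x| ^ n ≤ ((n : ℝ) + 1) * 1 * |x| ^ n := by
        apply mul_le_mul_of_nonneg_right _ (by positivity)
        apply mul_le_mul_of_nonneg_left (c_abs_le _) (by positivity)
    _ = ((n : ℝ) + 1) * |x| ^ n := by ring

lemma sum2 {x : ℝ} (hx : |x| < 1) :
    Summable fun n : ℕ => ((n : ℝ) + 1) * ((n : ℝ) + 2) * c (n + 2) * x ^ n := by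
  have hb : Summable fun n : ℕ => 2 * (((n : ℝ) + 1) ^ 2 * |x| ^ n) :=
    (summable_geom_w x hx 2).mul_left 2
  apply Summable.of_norm_bounded hb
  intro n
  rw [norm_mul, norm_mul, norm_mul, norm_pow]
  simp only [Real.norm_eq_abs]
  have h1 : |((n : ℝ) + 1)| = (n : ℝ) + 1 := abs_of_pos (by positivity)
  have h2 : |((n : ℝ) + 2)| = (n : ℝ) + 2 := abs_of_pos (by positivity)
  rw [h1, h2]
  have hc := c_abs_le (n + 2)
  have key : ((n : ℝ) + 1) * ((n : ℝ) + 2) * |c (n + 2)| ≤ 2 * ((n : ℝ) + 1) ^ 2 := by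
    calc ((n : ℝ) + 1) * ((n : ℝ) + 2) * |c (n + 2)|
        ≤ ((n : ℝ) + 1) * ((n : ℝ) + 2) * 1 := by
          apply mul_le_mul_of_nonneg_left hc (by positivity)
      _ ≤ 2 * ((n : ℝ) + 1) ^ 2 := by nlinarith [Nat.cast_nonneg (α := ℝ) n]
  calc ((n : ℝ) + 1) * ((n : ℝ) + 2) * |c (n + 2)| * |x| ^ n
      ≤ 2 * ((n : ℝ) + 1) ^ 2 * |x| ^ n := by
        apply mul_le_mul_of_nonneg_right key (by positivity)
    _ = 2 * (((n : ℝ) + 1) ^ 2 * |x| ^ n) := by ring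



lemma peelF {x : ℝ} (hx : |x| < 1) :
    F x = c 0 + ∑' n : ℕ, c (n + 1) * x ^ (n + 1) := by
  rw [F_eq, Summable.tsum_eq_zero_add (sum0 hx)]
  simp

lemma peelF1 {x : ℝ} (hx : |x| < 1) :
    F1 x = c 1 + ∑' n : ℕ, ((n : ℝ) + 2) * c (n + 2) * x ^ (n + 1) := by
  rw [F1, Summable.tsum_eq_zero_add (sum1 hx)]
  norm_num
  apply tsum_congr
  intro n
  simp only [show n + 1 + 1 = n + 2 from rfl]
  ring

theorem hasDerivAt_F {x : ℝ} (hx : |x| < 1) : HasDerivAt F (F1 x) x := by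
  set r : ℝ := (1 + |x|) / 2 with hr
  have hr1 : r < 1 := by simp only [hr]; linarith
  have hxr : |x| < r := by simp only [hr]; linarith [abs_nonneg x]
  have hr0 : 0 ≤ r := by positivity
  have hmem : x ∈ Ioo (-r) r := by
    constructor <;> [linarith [neg_abs_le x]; linarith [le_abs_self x]]
  have hG : HasDerivAt (fun y : ℝ => ∑' n : ℕ, c (n + 1) * y ^ (n + 1))
      (∑' n : ℕ, ((n : ℝ) + 1) * c (n + 1) * x ^ n) x := by
    refine hasDerivAt_tsum_of_isPreconnected
      (u := fun n : ℕ => ((n : ℝ) + 1) ^ 1 * r ^ n)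
      ((summable_geom_w r (by rwa [abs_of_nonneg hr0]) 1).congr
        (fun n => by rw [abs_of_nonneg hr0]))
      isOpen_Ioo (convex_Ioo _ _).isPreconnected
      (g := fun n y => c (n + 1) * y ^ (n + 1))
      (g' := fun n y => ((n : ℝ) + 1) * c (n + 1) * y ^ n)
      (fun n y _ => ?_) (fun n y hy => ?_) hmem ?_ hmem
    · have h := (hasDerivAt_pow (n + 1) y).const_mul (c (n + 1))
      refine h.congr_deriv ?_
      simp only [Nat.add_sub_cancel]
      push_cast
      ring
    · have hy' : |y| ≤ r := by
        rw [abs_le]; exact ⟨hy.1.le, hy.2.le⟩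
      simp only [Real.norm_eq_abs, abs_mul, abs_pow, pow_one]
      have h1 : |((n : ℝ) + 1)| = (n : ℝ) + 1 := abs_of_pos (by positivity)
      rw [h1]
      have : |c (n+1)| * |y| ^ n ≤ 1 * r ^ n := by
        apply mul_le_mul (c_abs_le _) (pow_le_pow_left₀ (abs_nonneg y) hy' n)
          (by positivity) (by norm_num)
      nlinarith [Nat.cast_nonneg (α := ℝ) n, abs_nonneg (c (n+1)), pow_nonneg (abs_nonneg y) n,
        pow_nonneg hr0 n]
    · exact ((sum0 hx).comp_injective Nat.succ_injective).congr fun n => rfl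
  have hF1 : HasDerivAt (fun y : ℝ => c 0 + ∑' n : ℕ, c (n + 1) * y ^ (n + 1)) (F1 x) x :=
    hG.const_add (c 0)
  apply hF1.congr_of_eventuallyEq
  filter_upwards [Ioo_mem_nhds (show -1 < x by linarith [neg_abs_le x])
    (show x < 1 by linarith [le_abs_self x])] with y hy
  have hy' : |y| < 1 := abs_lt.2 ⟨by linarith [hy.1], hy.2⟩
  exact peelF hy'

theorem hasDerivAt_F1 {x : ℝ} (hx : |x| < 1) : HasDerivAt F1 (F2 x) x := by
  set r : ℝ := (1 + |x|) / 2 with hr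
  have hr1 : r < 1 := by simp only [hr]; linarith
  have hxr : |x| < r := by simp only [hr]; linarith [abs_nonneg x]
  have hr0 : 0 ≤ r := by positivity
  have hmem : x ∈ Ioo (-r) r := by
    constructor <;> [linarith [neg_abs_le x]; linarith [le_abs_self x]]
  have hG : HasDerivAt (fun y : ℝ => ∑' n : ℕ, ((n : ℝ) + 2) * c (n + 2) * y ^ (n + 1))
      (∑' n : ℕ, ((n : ℝ) + 1) * ((n : ℝ) + 2) * c (n + 2) * x ^ n) x := by
    refine hasDerivAt_tsum_of_isPreconnected
      (u := fun n : ℕ => 2 * (((n : ℝ) + 1) ^ 2 * r ^ n))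
      (((summable_geom_w r (by rwa [abs_of_nonneg hr0]) 2).congr
        (fun n => by rw [abs_of_nonneg hr0])).mul_left 2)
      isOpen_Ioo (convex_Ioo _ _).isPreconnected
      (g := fun n y => ((n : ℝ) + 2) * c (n + 2) * y ^ (n + 1))
      (g' := fun n y => ((n : ℝ) + 1) * ((n : ℝ) + 2) * c (n + 2) * y ^ n)
      (fun n y _ => ?_) (fun n y hy => ?_) hmem ?_ hmem
    · have h := (hasDerivAt_pow (n + 1) y).const_mul (((n : ℝ) + 2) * c (n + 2))
      refine h.congr_deriv ?_
      simp only [Nat.add_sub_cancel]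
      push_cast
      ring
    · have hy' : |y| ≤ r := by
        rw [abs_le]; exact ⟨hy.1.le, hy.2.le⟩
      simp only [Real.norm_eq_abs, abs_mul, abs_pow]
      have h1 : |((n : ℝ) + 1)| = (n : ℝ) + 1 := abs_of_pos (by positivity)
      have h2 : |((n : ℝ) + 2)| = (n : ℝ) + 2 := abs_of_pos (by positivity)
      rw [h1, h2]
      have hcb : |c (n+2)| * |y| ^ n ≤ 1 * r ^ n := by
        apply mul_le_mul (c_abs_le _) (pow_le_pow_left₀ (abs_nonneg y) hy' n)
          (by positivity) (by norm_num)
      have h3 := mul_le_mul_of_nonneg_left hcb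
        (show (0:ℝ) ≤ ((n:ℝ)+1)*((n:ℝ)+2) by positivity)
      nlinarith [h3, mul_nonneg (mul_nonneg (Nat.cast_nonneg (α := ℝ) n)
        (show (0:ℝ) ≤ (n:ℝ) + 1 by positivity)) (pow_nonneg hr0 n)]
    · apply ((sum1 hx).comp_injective Nat.succ_injective).congr
      intro n
      show ((↑(n+1) : ℝ) + 1) * c (n + 2) * x ^ (n + 1) = _
      push_cast
      ring
  have hF1 : HasDerivAt
      (fun y : ℝ => c 1 + ∑' n : ℕ, ((n : ℝ) + 2) * c (n + 2) * y ^ (n + 1)) (F2 x) x :=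
    hG.const_add (c 1)
  apply hF1.congr_of_eventuallyEq
  filter_upwards [Ioo_mem_nhds (show -1 < x by linarith [neg_abs_le x])
    (show x < 1 by linarith [le_abs_self x])] with y hy
  have hy' : |y| < 1 := abs_lt.2 ⟨by linarith [hy.1], hy.2⟩
  exact peelF1 hy'



lemma partial_sum_e (x : ℝ) (N : ℕ) :
    ∑ k ∈ Finset.range N,
      (x * (1 - x) * (((k : ℝ) + 1) * ((k : ℝ) + 2) * c (k + 2) * x ^ k)
        + (1 - 2 * x) * (((k : ℝ) + 1) * c (k + 1) * x ^ k)
        - (1 / 4) * (c k * x ^ k))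
    = -(((N : ℝ) + 1) * c (N + 1) - c N / 4) * x ^ N
      - (N : ℝ) * ((N : ℝ) + 1) * c (N + 1) * x ^ (N + 1) := by
  induction N with
  | zero =>
    have h0 := c_rec 0
    norm_num at h0 ⊢
    linarith
  | succ N ih =>
    rw [Finset.sum_range_succ, ih]
    have hr := c_rec (N + 1)
    push_cast at hr ⊢
    simp only [show N + 1 + 1 = N + 2 from rfl] at *
    linear_combination (x ^ (N + 1) / 4) * hr

lemma tendsto_tail (x : ℝ) (hx : |x| < 1) :
    Tendsto (fun N : ℕ => -(((N : ℝ) + 1) * c (N + 1) - c N / 4) * x ^ N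
      - (N : ℝ) * ((N : ℝ) + 1) * c (N + 1) * x ^ (N + 1)) atTop (𝓝 0) := by
  have hb : Summable fun N : ℕ => 2 * (((N : ℝ) + 1) * |x| ^ N)
      + ((N : ℝ) + 1) ^ 2 * |x| ^ (N + 1) := by
    apply Summable.add
    · exact ((summable_geom_w x hx 1).congr (fun n => by rw [pow_one])).mul_left 2
    · have := (summable_geom_w x hx 2).mul_left |x|
      apply this.congr
      intro n
      ring
  have hb0 := hb.tendsto_atTop_zero
  apply squeeze_zero_norm _ hb0
  intro N
  have h1 : ‖-(((N : ℝ) + 1) * c (N + 1) - c N / 4) * x ^ N‖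
      ≤ 2 * (((N : ℝ) + 1) * |x| ^ N) := by
    rw [norm_mul, norm_neg, Real.norm_eq_abs, Real.norm_eq_abs, abs_pow]
    have hc1 := c_abs_le (N + 1)
    have hc0 := c_abs_le N
    have habs : |((N : ℝ) + 1) * c (N + 1) - c N / 4| ≤ 2 * ((N : ℝ) + 1) := by
      have := abs_sub (((N : ℝ) + 1) * c (N + 1)) (c N / 4)
      rw [abs_mul, abs_div] at this
      have hN1 : |((N : ℝ) + 1)| = (N : ℝ) + 1 := abs_of_pos (by positivity)
      rw [hN1] at this
      have h4 : |(4:ℝ)| = 4 := by norm_num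
      rw [h4] at this
      nlinarith [abs_nonneg (c (N+1)), abs_nonneg (c N), Nat.cast_nonneg (α := ℝ) N]
    have hxn : (0:ℝ) ≤ |x| ^ N := by positivity
    nlinarith [mul_le_mul_of_nonneg_right habs hxn]
  have h2 : ‖(N : ℝ) * ((N : ℝ) + 1) * c (N + 1) * x ^ (N + 1)‖
      ≤ ((N : ℝ) + 1) ^ 2 * |x| ^ (N + 1) := by
    rw [norm_mul, norm_mul, norm_mul, Real.norm_eq_abs, Real.norm_eq_abs, Real.norm_eq_abs,
      Real.norm_eq_abs, abs_pow]
    have hN : |(N : ℝ)| = (N : ℝ) := abs_of_nonneg (Nat.cast_nonneg N)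
    have hN1 : |((N : ℝ) + 1)| = (N : ℝ) + 1 := abs_of_pos (by positivity)
    rw [hN, hN1]
    have hc := c_abs_le (N + 1)
    have hxn : (0:ℝ) ≤ |x| ^ (N + 1) := by positivity
    nlinarith [abs_nonneg (c (N + 1)), Nat.cast_nonneg (α := ℝ) N,
      mul_nonneg (mul_nonneg (Nat.cast_nonneg (α := ℝ) N)
        (show (0:ℝ) ≤ (N:ℝ)+1 by positivity)) hxn]
  calc ‖-(((N : ℝ) + 1) * c (N + 1) - c N / 4) * x ^ N
      - (N : ℝ) * ((N : ℝ) + 1) * c (N + 1) * x ^ (N + 1)‖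
      ≤ ‖-(((N : ℝ) + 1) * c (N + 1) - c N / 4) * x ^ N‖
        + ‖(N : ℝ) * ((N : ℝ) + 1) * c (N + 1) * x ^ (N + 1)‖ := norm_sub_le _ _
    _ ≤ 2 * (((N : ℝ) + 1) * |x| ^ N) + ((N : ℝ) + 1) ^ 2 * |x| ^ (N + 1) := by
        exact add_le_add h1 h2

theorem ode {x : ℝ} (hx : |x| < 1) :
    x * (1 - x) * F2 x + (1 - 2 * x) * F1 x - F x / 4 = 0 := by
  have hA : Summable fun n : ℕ =>
      x * (1 - x) * (((n : ℝ) + 1) * ((n : ℝ) + 2) * c (n + 2) * x ^ n) :=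
    (sum2 hx).mul_left _
  have hB : Summable fun n : ℕ => (1 - 2 * x) * (((n : ℝ) + 1) * c (n + 1) * x ^ n) :=
    (sum1 hx).mul_left _
  have hC : Summable fun n : ℕ => (1 / 4 : ℝ) * (c n * x ^ n) := (sum0 hx).mul_left _
  have hE : Summable fun n : ℕ =>
      x * (1 - x) * (((n : ℝ) + 1) * ((n : ℝ) + 2) * c (n + 2) * x ^ n)
        + (1 - 2 * x) * (((n : ℝ) + 1) * c (n + 1) * x ^ n)
        - (1 / 4) * (c n * x ^ n) := (hA.add hB).sub hC
  have key : (∑' n : ℕ,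
      (x * (1 - x) * (((n : ℝ) + 1) * ((n : ℝ) + 2) * c (n + 2) * x ^ n)
        + (1 - 2 * x) * (((n : ℝ) + 1) * c (n + 1) * x ^ n)
        - (1 / 4) * (c n * x ^ n))) = 0 := by
    have ht := hE.hasSum.tendsto_sum_nat
    have ht2 : Tendsto (fun N : ℕ => ∑ k ∈ Finset.range N,
      (x * (1 - x) * (((k : ℝ) + 1) * ((k : ℝ) + 2) * c (k + 2) * x ^ k)
        + (1 - 2 * x) * (((k : ℝ) + 1) * c (k + 1) * x ^ k)
        - (1 / 4) * (c k * x ^ k))) atTop (𝓝 0) := by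
      have := tendsto_tail x hx
      apply this.congr
      intro N
      exact (partial_sum_e x N).symm
    exact tendsto_nhds_unique ht ht2
  have expand : x * (1 - x) * F2 x + (1 - 2 * x) * F1 x - F x / 4
      = ∑' n : ℕ,
      (x * (1 - x) * (((n : ℝ) + 1) * ((n : ℝ) + 2) * c (n + 2) * x ^ n)
        + (1 - 2 * x) * (((n : ℝ) + 1) * c (n + 1) * x ^ n)
        - (1 / 4) * (c n * x ^ n)) := by
    rw [Summable.tsum_sub (hA.add hB) hC, Summable.tsum_add hA hB]
    rw [F2, F1, F_eq, tsum_mul_left, tsum_mul_left, tsum_mul_left]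
    ring
  rw [expand, key]


lemma F_zero : F 0 = 1 := by
  rw [F_eq]
  rw [tsum_eq_single 0 (fun b hb => by simp [zero_pow hb])]
  simp [c_zero]

lemma F1_zero : F1 0 = 1 / 4 := by
  rw [F1, tsum_eq_single 0 (fun b hb => by simp [zero_pow hb])]
  simp [c_one]

lemma F_one_le {x : ℝ} (hx0 : 0 ≤ x) (hx1 : x < 1) : 1 ≤ F x := by
  have habs : |x| < 1 := by rwa [abs_of_nonneg hx0]
  rw [F_eq]
  have h := Summable.le_tsum (sum0 habs) 0 (fun j _ => mul_nonneg (c_pos j).le (by positivity))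
  simpa [c_zero] using h

lemma F_pos {x : ℝ} (hx0 : 0 ≤ x) (hx1 : x < 1) : 0 < F x :=
  lt_of_lt_of_le one_pos (F_one_le hx0 hx1)

lemma F_strict {x y : ℝ} (hx0 : 0 ≤ x) (hxy : x < y) (hy1 : y < 1) : F x < F y := by
  have hxa : |x| < 1 := by rw [abs_of_nonneg hx0]; linarith
  have hya : |y| < 1 := by rw [abs_of_nonneg (by linarith : (0:ℝ) ≤ y)]; linarith
  rw [F_eq, F_eq]
  apply Summable.tsum_lt_tsum (i := 1) _ _ (sum0 hxa) (sum0 hya)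
  · intro n
    apply mul_le_mul_of_nonneg_left _ (c_pos n).le
    exact pow_le_pow_left₀ hx0 hxy.le n
  · have := c_pos 1
    simp only [pow_one]
    nlinarith


lemma keyalg (m A A1 A2 B B1 B2 : ℝ)
    (hL1 : (m-1)*(m+3)^3 * (16*m^3 - (m-1)*(m+3)^3) * A2
         + 16*m^3 * (16*m^3 - 2*((m-1)*(m+3)^3)) * A1 - 64*m^6*A = 0)
    (hL2 : (m-1)^3*(m+3) * (16*m - (m-1)^3*(m+3)) * B2
         + 16*m * (16*m - 2*((m-1)^3*(m+3))) * B1 - 64*m^2*B = 0) :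
    59049*m*A2*B - 91854*m^3*A2*B - 69984*m^4*A1*B + 40095*m^5*A2*B - 81*m^5*A*B2
      + 62208*m^6*A1*B + 864*m^6*A*B1 - 8100*m^7*A2*B + 414*m^7*A*B2 + 4608*m^7*A*B
      - 8640*m^8*A1*B + 855*m^9*A2*B - 855*m^9*A*B2 - 2880*m^10*A*B1 - 46*m^11*A2*B
      + 900*m^11*A*B2 - 512*m^11*A*B + 32*m^12*A1*B + 2304*m^12*A*B1 + 1*m^13*A2*B
      - 495*m^13*A*B2 - 288*m^14*A*B1 + 126*m^15*A*B2 - 9*m^17*A*B2 = 0 := by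
  linear_combination (-(m*B)*(m^2-9)^2) * hL1 + (9*m^5*A*(m^2-1)^2) * hL2

noncomputable def ff (m : ℝ) : ℝ := F ((m-1)*(m+3)^3/(16*m^3))
noncomputable def gg (m : ℝ) : ℝ := m * F ((m-1)^3*(m+3)/(16*m))
noncomputable def ffd (m : ℝ) : ℝ := F1 ((m-1)*(m+3)^3/(16*m^3)) * ((m^2-9)^2/(16*m^4))
noncomputable def ggd (m : ℝ) : ℝ :=
  F ((m-1)^3*(m+3)/(16*m)) + m * F1 ((m-1)^3*(m+3)/(16*m)) * (3*(m^2-1)^2/(16*m^2))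
noncomputable def ffdd (m : ℝ) : ℝ :=
  F2 ((m-1)*(m+3)^3/(16*m^3)) * ((m^2-9)^2/(16*m^4))^2
    + F1 ((m-1)*(m+3)^3/(16*m^3)) * (9*(m^2-9)/(4*m^5))
noncomputable def ggdd (m : ℝ) : ℝ :=
  2 * F1 ((m-1)^3*(m+3)/(16*m)) * (3*(m^2-1)^2/(16*m^2))
    + m * (F2 ((m-1)^3*(m+3)/(16*m)) * (3*(m^2-1)^2/(16*m^2))^2
      + F1 ((m-1)^3*(m+3)/(16*m)) * (3*(m^2-1)*(m^2+1)/(8*m^3)))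
noncomputable def VV (m : ℝ) : ℝ :=
  (ff m * ggd m - ffd m * gg m) * ((m^2-1)*(9-m^2)/(16*m^2))
noncomputable def vale (m : ℝ) : ℝ :=
  (ff m * ggdd m - ffdd m * gg m) * ((m^2-1)*(9-m^2)/(16*m^2))
    + (ff m * ggd m - ffd m * gg m) * ((9-m^4)/(8*m^3))

-- range facts
lemma af_nonneg {m : ℝ} (h1 : 1 ≤ m) : 0 ≤ (m-1)*(m+3)^3/(16*m^3) := by
  have hm : 0 < m := lt_of_lt_of_le one_pos h1
  have h : 0 ≤ (m-1)*(m+3)^3 := mul_nonneg (by linarith) (by positivity)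
  positivity

lemma af_lt_one {m : ℝ} (h1 : 1 ≤ m) (h3 : m < 3) : (m-1)*(m+3)^3/(16*m^3) < 1 := by
  have hm : 0 < m := lt_of_lt_of_le one_pos h1
  rw [div_lt_one (by positivity)]
  have key : 16*m^3 - (m-1)*(m+3)^3 = (3-m)^3*(m+1) := by ring
  have hp : 0 < (3-m)^3*(m+1) :=
    mul_pos (pow_pos (by linarith) 3) (by linarith)
  linarith [key ▸ hp]

lemma af_abs {m : ℝ} (h1 : 1 ≤ m) (h3 : m < 3) : |(m-1)*(m+3)^3/(16*m^3)| < 1 := by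
  rw [abs_of_nonneg (af_nonneg h1)]; exact af_lt_one h1 h3

lemma bf_nonneg {m : ℝ} (h1 : 1 ≤ m) : 0 ≤ (m-1)^3*(m+3)/(16*m) := by
  have hm : 0 < m := lt_of_lt_of_le one_pos h1
  have h : 0 ≤ (m-1)^3*(m+3) := mul_nonneg (pow_nonneg (by linarith) 3) (by linarith)
  positivity

lemma bf_lt_one {m : ℝ} (h1 : 1 ≤ m) (h3 : m < 3) : (m-1)^3*(m+3)/(16*m) < 1 := by
  have hm : 0 < m := lt_of_lt_of_le one_pos h1
  rw [div_lt_one (by positivity)]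
  have key : 16*m - (m-1)^3*(m+3) = (3-m)*(m+1)^3 := by ring
  have hp : 0 < (3-m)*(m+1)^3 :=
    mul_pos (by linarith) (pow_pos (by linarith) 3)
  linarith [key ▸ hp]

lemma bf_abs {m : ℝ} (h1 : 1 ≤ m) (h3 : m < 3) : |(m-1)^3*(m+3)/(16*m)| < 1 := by
  rw [abs_of_nonneg (bf_nonneg h1)]; exact bf_lt_one h1 h3

-- derivatives of the rational functions
lemma d_af {m : ℝ} (hm : m ≠ 0) :
    HasDerivAt (fun x : ℝ => (x-1)*(x+3)^3/(16*x^3)) ((m^2-9)^2/(16*m^4)) m := by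
  have h1 : HasDerivAt (fun x : ℝ => (x-1)*(x+3)^3)
      (1*(m+3)^3 + (m-1)*(3*(m+3)^2*1)) m :=
    ((hasDerivAt_id m).sub_const 1).mul (((hasDerivAt_id m).add_const 3).pow 3)
  have h2 : HasDerivAt (fun x : ℝ => 16*x^3) (16*(3*m^2)) m := by
    simpa using (hasDerivAt_pow 3 m).const_mul (16:ℝ)
  have h3 := h1.div h2 (by simp [pow_ne_zero, hm])
  refine h3.congr_deriv ?_
  field_simp
  ring

lemma d_bf {m : ℝ} (hm : m ≠ 0) :
    HasDerivAt (fun x : ℝ => (x-1)^3*(x+3)/(16*x)) (3*(m^2-1)^2/(16*m^2)) m := by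
  have h1 : HasDerivAt (fun x : ℝ => (x-1)^3*(x+3))
      ((3*(m-1)^2*1)*(m+3) + (m-1)^3*1) m :=
    (((hasDerivAt_id m).sub_const 1).pow 3).mul ((hasDerivAt_id m).add_const 3)
  have h2 : HasDerivAt (fun x : ℝ => 16*x) (16:ℝ) m := by
    simpa using (hasDerivAt_id m).const_mul (16:ℝ)
  have h3 := h1.div h2 (by simp [hm])
  refine h3.congr_deriv ?_
  field_simp
  ring

lemma d_adf {m : ℝ} (hm : m ≠ 0) :
    HasDerivAt (fun x : ℝ => (x^2-9)^2/(16*x^4)) (9*(m^2-9)/(4*m^5)) m := by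
  have h1 : HasDerivAt (fun x : ℝ => (x^2-9)^2) (2*(m^2-9)^1*(2*m^1)) m := by
    exact (((hasDerivAt_pow 2 m).sub_const 9).pow 2)
  have h2 : HasDerivAt (fun x : ℝ => 16*x^4) (16*(4*m^3)) m := by
    simpa using (hasDerivAt_pow 4 m).const_mul (16:ℝ)
  have h3 := h1.div h2 (by simp [pow_ne_zero, hm])
  refine h3.congr_deriv ?_
  field_simp
  ring

lemma d_bdf {m : ℝ} (hm : m ≠ 0) :
    HasDerivAt (fun x : ℝ => 3*(x^2-1)^2/(16*x^2)) (3*(m^2-1)*(m^2+1)/(8*m^3)) m := by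
  have h1 : HasDerivAt (fun x : ℝ => 3*(x^2-1)^2) (3*(2*(m^2-1)^1*(2*m^1))) m := by
    exact (((hasDerivAt_pow 2 m).sub_const 1).pow 2).const_mul 3
  have h2 : HasDerivAt (fun x : ℝ => 16*x^2) (16*(2*m^1)) m := by
    simpa using (hasDerivAt_pow 2 m).const_mul (16:ℝ)
  have h3 := h1.div h2 (by simp [pow_ne_zero, hm])
  refine h3.congr_deriv ?_
  field_simp
  ring

lemma d_uf {m : ℝ} (hm : m ≠ 0) :
    HasDerivAt (fun x : ℝ => (x^2-1)*(9-x^2)/(16*x^2)) ((9-m^4)/(8*m^3)) m := by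
  have h1 : HasDerivAt (fun x : ℝ => (x^2-1)*(9-x^2))
      ((2*m^1)*(9-m^2) + (m^2-1)*(-(2*m^1))) m := by
    exact ((hasDerivAt_pow 2 m).sub_const 1).mul
      (((hasDerivAt_pow 2 m).const_sub 9))
  have h2 : HasDerivAt (fun x : ℝ => 16*x^2) (16*(2*m^1)) m := by
    simpa using (hasDerivAt_pow 2 m).const_mul (16:ℝ)
  have h3 := h1.div h2 (by simp [pow_ne_zero, hm])
  refine h3.congr_deriv ?_
  field_simp
  ring

lemma d_ff {m : ℝ} (h1 : 1 ≤ m) (h3 : m < 3) : HasDerivAt ff (ffd m) m := by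
  have hm : m ≠ 0 := by intro h; rw [h] at h1; linarith
  exact (hasDerivAt_F (af_abs h1 h3)).comp m (d_af hm)

lemma d_gg {m : ℝ} (h1 : 1 ≤ m) (h3 : m < 3) : HasDerivAt gg (ggd m) m := by
  have hm : m ≠ 0 := by intro h; rw [h] at h1; linarith
  have h := (hasDerivAt_id m).mul ((hasDerivAt_F (bf_abs h1 h3)).comp m (d_bf hm))
  refine h.congr_deriv ?_
  simp [ggd]
  ring

lemma d_ffd {m : ℝ} (h1 : 1 ≤ m) (h3 : m < 3) : HasDerivAt ffd (ffdd m) m := by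
  have hm : m ≠ 0 := by intro h; rw [h] at h1; linarith
  have h := ((hasDerivAt_F1 (af_abs h1 h3)).comp m (d_af hm)).mul (d_adf hm)
  refine h.congr_deriv ?_
  simp [ffdd]
  ring

lemma d_ggd {m : ℝ} (h1 : 1 ≤ m) (h3 : m < 3) : HasDerivAt ggd (ggdd m) m := by
  have hm : m ≠ 0 := by intro h; rw [h] at h1; linarith
  have ha := (hasDerivAt_F (bf_abs h1 h3)).comp m (d_bf hm)
  have hb := ((hasDerivAt_id m).mul ((hasDerivAt_F1 (bf_abs h1 h3)).comp m (d_bf hm))).mul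
    (d_bdf hm)
  have h := ha.add hb
  refine h.congr_deriv ?_
  simp [ggdd]
  ring

lemma d_VV {m : ℝ} (h1 : 1 ≤ m) (h3 : m < 3) : HasDerivAt VV (vale m) m := by
  have hm : m ≠ 0 := by intro h; rw [h] at h1; linarith
  have hW := ((d_ff h1 h3).mul (d_ggd h1 h3)).sub ((d_ffd h1 h3).mul (d_gg h1 h3))
  have h := hW.mul (d_uf hm)
  refine h.congr_deriv ?_
  unfold vale
  simp only [Pi.sub_apply, Pi.mul_apply]
  ring




set_option maxHeartbeats 4000000 in
lemma vale_zero {m : ℝ} (h1 : 1 ≤ m) (h3 : m < 3) : vale m = 0 := by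
  rcases eq_or_lt_of_le h1 with heq | hlt
  · subst heq
    unfold vale ff gg ffd ggd ffdd ggdd
    norm_num [F_zero, F1_zero]
  · have hm : m ≠ 0 := by intro h; rw [h] at h1; linarith
    have hm0 : 0 < m := by linarith
    have R1 := ode (af_abs h1 h3)
    have R2 := ode (bf_abs h1 h3)
    have hL1 : (m-1)*(m+3)^3 * (16*m^3 - (m-1)*(m+3)^3) * F2 ((m-1)*(m+3)^3/(16*m^3))
         + 16*m^3 * (16*m^3 - 2*((m-1)*(m+3)^3)) * F1 ((m-1)*(m+3)^3/(16*m^3))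
         - 64*m^6 * F ((m-1)*(m+3)^3/(16*m^3)) = 0 := by
      calc (m-1)*(m+3)^3 * (16*m^3 - (m-1)*(m+3)^3) * F2 ((m-1)*(m+3)^3/(16*m^3))
         + 16*m^3 * (16*m^3 - 2*((m-1)*(m+3)^3)) * F1 ((m-1)*(m+3)^3/(16*m^3))
         - 64*m^6 * F ((m-1)*(m+3)^3/(16*m^3))
          = (256*m^6) * ((m-1)*(m+3)^3/(16*m^3) * (1 - (m-1)*(m+3)^3/(16*m^3))
              * F2 ((m-1)*(m+3)^3/(16*m^3))
            + (1 - 2 * ((m-1)*(m+3)^3/(16*m^3))) * F1 ((m-1)*(m+3)^3/(16*m^3))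
            - F ((m-1)*(m+3)^3/(16*m^3)) / 4) := by
            field_simp
            ring
        _ = 0 := by rw [R1, mul_zero]
    have hL2 : (m-1)^3*(m+3) * (16*m - (m-1)^3*(m+3)) * F2 ((m-1)^3*(m+3)/(16*m))
         + 16*m * (16*m - 2*((m-1)^3*(m+3))) * F1 ((m-1)^3*(m+3)/(16*m))
         - 64*m^2 * F ((m-1)^3*(m+3)/(16*m)) = 0 := by
      calc (m-1)^3*(m+3) * (16*m - (m-1)^3*(m+3)) * F2 ((m-1)^3*(m+3)/(16*m))
         + 16*m * (16*m - 2*((m-1)^3*(m+3))) * F1 ((m-1)^3*(m+3)/(16*m))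
         - 64*m^2 * F ((m-1)^3*(m+3)/(16*m))
          = (256*m^2) * ((m-1)^3*(m+3)/(16*m) * (1 - (m-1)^3*(m+3)/(16*m))
              * F2 ((m-1)^3*(m+3)/(16*m))
            + (1 - 2 * ((m-1)^3*(m+3)/(16*m))) * F1 ((m-1)^3*(m+3)/(16*m))
            - F ((m-1)^3*(m+3)/(16*m)) / 4) := by
            field_simp
            ring
        _ = 0 := by rw [R2, mul_zero]
    have hG := keyalg m (F ((m-1)*(m+3)^3/(16*m^3))) (F1 ((m-1)*(m+3)^3/(16*m^3)))
      (F2 ((m-1)*(m+3)^3/(16*m^3))) (F ((m-1)^3*(m+3)/(16*m))) (F1 ((m-1)^3*(m+3)/(16*m)))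
      (F2 ((m-1)^3*(m+3)/(16*m))) hL1 hL2
    have hv : 4096*m^10 * vale m
        = 59049*m*(F2 ((m-1)*(m+3)^3/(16*m^3)))*(F ((m-1)^3*(m+3)/(16*m)))
        - 91854*m^3*(F2 ((m-1)*(m+3)^3/(16*m^3)))*(F ((m-1)^3*(m+3)/(16*m)))
        - 69984*m^4*(F1 ((m-1)*(m+3)^3/(16*m^3)))*(F ((m-1)^3*(m+3)/(16*m)))
        + 40095*m^5*(F2 ((m-1)*(m+3)^3/(16*m^3)))*(F ((m-1)^3*(m+3)/(16*m)))
        - 81*m^5*(F ((m-1)*(m+3)^3/(16*m^3)))*(F2 ((m-1)^3*(m+3)/(16*m)))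
        + 62208*m^6*(F1 ((m-1)*(m+3)^3/(16*m^3)))*(F ((m-1)^3*(m+3)/(16*m)))
        + 864*m^6*(F ((m-1)*(m+3)^3/(16*m^3)))*(F1 ((m-1)^3*(m+3)/(16*m)))
        - 8100*m^7*(F2 ((m-1)*(m+3)^3/(16*m^3)))*(F ((m-1)^3*(m+3)/(16*m)))
        + 414*m^7*(F ((m-1)*(m+3)^3/(16*m^3)))*(F2 ((m-1)^3*(m+3)/(16*m)))
        + 4608*m^7*(F ((m-1)*(m+3)^3/(16*m^3)))*(F ((m-1)^3*(m+3)/(16*m)))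
        - 8640*m^8*(F1 ((m-1)*(m+3)^3/(16*m^3)))*(F ((m-1)^3*(m+3)/(16*m)))
        + 855*m^9*(F2 ((m-1)*(m+3)^3/(16*m^3)))*(F ((m-1)^3*(m+3)/(16*m)))
        - 855*m^9*(F ((m-1)*(m+3)^3/(16*m^3)))*(F2 ((m-1)^3*(m+3)/(16*m)))
        - 2880*m^10*(F ((m-1)*(m+3)^3/(16*m^3)))*(F1 ((m-1)^3*(m+3)/(16*m)))
        - 46*m^11*(F2 ((m-1)*(m+3)^3/(16*m^3)))*(F ((m-1)^3*(m+3)/(16*m)))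
        + 900*m^11*(F ((m-1)*(m+3)^3/(16*m^3)))*(F2 ((m-1)^3*(m+3)/(16*m)))
        - 512*m^11*(F ((m-1)*(m+3)^3/(16*m^3)))*(F ((m-1)^3*(m+3)/(16*m)))
        + 32*m^12*(F1 ((m-1)*(m+3)^3/(16*m^3)))*(F ((m-1)^3*(m+3)/(16*m)))
        + 2304*m^12*(F ((m-1)*(m+3)^3/(16*m^3)))*(F1 ((m-1)^3*(m+3)/(16*m)))
        + 1*m^13*(F2 ((m-1)*(m+3)^3/(16*m^3)))*(F ((m-1)^3*(m+3)/(16*m)))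
        - 495*m^13*(F ((m-1)*(m+3)^3/(16*m^3)))*(F2 ((m-1)^3*(m+3)/(16*m)))
        - 288*m^14*(F ((m-1)*(m+3)^3/(16*m^3)))*(F1 ((m-1)^3*(m+3)/(16*m)))
        + 126*m^15*(F ((m-1)*(m+3)^3/(16*m^3)))*(F2 ((m-1)^3*(m+3)/(16*m)))
        - 9*m^17*(F ((m-1)*(m+3)^3/(16*m^3)))*(F2 ((m-1)^3*(m+3)/(16*m))) := by
      unfold vale ff gg ffd ggd ffdd ggdd
      field_simp
      ring
    have hz : 4096*m^10 * vale m = 0 := by rw [hv]; linear_combination hG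
    have hnz : (4096:ℝ)*m^10 ≠ 0 := mul_ne_zero (by norm_num) (pow_ne_zero _ hm)
    rcases mul_eq_zero.mp hz with h | h
    · exact absurd h hnz
    · exact h

lemma VV_one : VV 1 = 0 := by
  unfold VV ff gg ffd ggd
  norm_num

lemma VV_zero {m : ℝ} (h1 : 1 ≤ m) (h3 : m < 3) : VV m = 0 := by
  rcases eq_or_lt_of_le h1 with heq | hlt
  · subst heq; exact VV_one
  · have hcont : ContinuousOn VV (Icc 1 m) := fun x hx =>
      ((d_VV hx.1 (lt_of_le_of_lt hx.2 h3)).continuousAt).continuousWithinAt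
    have hder : ∀ x ∈ Ico 1 m, HasDerivWithinAt VV 0 (Ici x) x := by
      intro x hx
      have hx3 : x < 3 := lt_trans hx.2 h3
      have := (d_VV hx.1 hx3).hasDerivWithinAt (s := Ici x)
      rwa [vale_zero hx.1 hx3] at this
    have := constant_of_has_deriv_right_zero hcont hder m (by constructor <;> linarith)
    rw [this, VV_one]

lemma W_zero {m : ℝ} (h1 : 1 ≤ m) (h3 : m < 3) :
    ff m * ggd m - ffd m * gg m = 0 := by
  rcases eq_or_lt_of_le h1 with heq | hlt
  · subst heq
    unfold ff gg ffd ggd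
    norm_num [F_zero, F1_zero]
  · have hV := VV_zero h1 h3
    unfold VV at hV
    rcases mul_eq_zero.mp hV with h | h
    · exact h
    · exfalso
      have hu : 0 < (m^2-1)*(9-m^2)/(16*m^2) := by
        apply div_pos
        · apply mul_pos <;> nlinarith
        · nlinarith
      rw [h] at hu
      exact lt_irrefl 0 hu

lemma gg_pos {m : ℝ} (h1 : 1 ≤ m) (h3 : m < 3) : 0 < gg m := by
  unfold gg
  exact mul_pos (by linarith) (F_pos (bf_nonneg h1) (bf_lt_one h1 h3))

lemma ff_eq_gg {m : ℝ} (h1 : 1 ≤ m) (h3 : m < 3) : ff m = gg m := by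
  have hrr : ∀ x, 1 ≤ x → x < 3 →
      HasDerivAt (fun y => ff y / gg y) 0 x := by
    intro x hx1 hx3
    have h := (d_ff hx1 hx3).div (d_gg hx1 hx3) (gg_pos hx1 hx3).ne'
    have hnum : ffd x * gg x - ff x * ggd x = 0 := by
      have := W_zero hx1 hx3
      nlinarith [this]
    rwa [hnum, zero_div] at h
  have hone : ff 1 / gg 1 = 1 := by
    unfold ff gg
    norm_num [F_zero]
  rcases eq_or_lt_of_le h1 with heq | hlt
  · subst heq
    unfold ff gg
    norm_num [F_zero]
  · have hcont : ContinuousOn (fun y => ff y / gg y) (Icc 1 m) := fun x hx =>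
      ((hrr x hx.1 (lt_of_le_of_lt hx.2 h3)).continuousAt).continuousWithinAt
    have hder : ∀ x ∈ Ico 1 m, HasDerivWithinAt (fun y => ff y / gg y) 0 (Ici x) x :=
      fun x hx => (hrr x hx.1 (lt_trans hx.2 h3)).hasDerivWithinAt
    have hc := constant_of_has_deriv_right_zero hcont hder m (by constructor <;> linarith)
    rw [hone] at hc
    have hgg := (gg_pos h1 h3).ne'
    field_simp at hc
    exact hc

lemma cubic : F ((2+Real.sqrt 3)/4) = Real.sqrt 3 * F ((2-Real.sqrt 3)/4) := by
  set s := Real.sqrt 3 with hs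
  have hs2 : s^2 = 3 := Real.sq_sqrt (by norm_num)
  have hs0 : 0 < s := Real.sqrt_pos.mpr (by norm_num)
  have hs1 : 1 ≤ s := by nlinarith
  have hs3 : s < 3 := by nlinarith
  have h := ff_eq_gg hs1 hs3
  unfold ff gg at h
  have ha : (s-1)*(s+3)^3/(16*s^3) = (2+s)/4 := by
    rw [div_eq_div_iff (by positivity) (by norm_num)]
    linear_combination (-12*s^2+36)*hs2
  have hb : (s-1)^3*(s+3)/(16*s) = (2-s)/4 := by
    rw [div_eq_div_iff (by positivity) (by norm_num)]
    linear_combination (4*s^2+4)*hs2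
  rw [ha, hb] at h
  exact h



end SM3

theorem singular_modulus_three (α : ℝ) (h0 : 0 < α) (h1 : α < 1)
    (h : F (1 - α) = Real.sqrt 3 * F α) :
    α = (2 - Real.sqrt 3) / 4 := by
  have hs2 : Real.sqrt 3 ^ 2 = 3 := Real.sq_sqrt (by norm_num)
  have hs0 : 0 < Real.sqrt 3 := Real.sqrt_pos.mpr (by norm_num)
  have hsgt1 : 1 < Real.sqrt 3 := by nlinarith
  have hslt2 : Real.sqrt 3 < 2 := by nlinarith
  have h00 : 0 < (2 - Real.sqrt 3) / 4 := by linarith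
  have h01 : (2 - Real.sqrt 3) / 4 < 1 := by linarith
  have hkey : F (1 - (2 - Real.sqrt 3) / 4) = Real.sqrt 3 * F ((2 - Real.sqrt 3) / 4) := by
    rw [show 1 - (2 - Real.sqrt 3) / 4 = (2 + Real.sqrt 3) / 4 by ring]
    exact SM3.cubic
  rcases lt_trichotomy α ((2 - Real.sqrt 3) / 4) with hlt | heq | hgt
  · exfalso
    have hFa : F α < F ((2 - Real.sqrt 3) / 4) := SM3.F_strict h0.le hlt h01
    have hFb : F (1 - (2 - Real.sqrt 3) / 4) < F (1 - α) :=
      SM3.F_strict (by linarith) (by linarith) (by linarith)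
    nlinarith [mul_lt_mul_of_pos_left hFa hs0]
  · exact heq
  · exfalso
    have hFa : F ((2 - Real.sqrt 3) / 4) < F α := SM3.F_strict h00.le hgt h1
    have hFb : F (1 - α) < F (1 - (2 - Real.sqrt 3) / 4) :=
      SM3.F_strict (by linarith) (by linarith) (by linarith)
    nlinarith [mul_lt_mul_of_pos_left hFa hs0]
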